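/- (Analogue of Nielsen's theorem) For standard states |ψ_θ⟩ = (1/√2)(e^{iθ/2}|0⟩+e^{−iθ/2}|1⟩) and |ψ_γ⟩ with θ, γ ∈ [0,π/2], there exists a finite set of real 2×2 Kraus operators {K_k} with Σ_k K_k†K_k = I and real orthogonal matrices {O_k} such that K_k|ψ_θ⟩ is proportional to O_k|ψ_γ⟩ for all k, if and only if γ ≤ θ. -/

import Mathlib

open Complex Matrix

/-- The standard state `|ψ_θ⟩ = (1/√2)(e^{iθ/2}|0⟩ + e^{-iθ/2}|1⟩)`. -/
noncomputable def stdState (θ : ℝ) : Fin 2 → ℂ := fun i =>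
  if i = 0 then Complex.exp (Complex.I * (θ : ℂ) / 2) / (Real.sqrt 2 : ℂ)
  else Complex.exp (-(Complex.I * (θ : ℂ)) / 2) / (Real.sqrt 2 : ℂ)

private lemma exp_half_aux (t : ℝ) : Complex.exp (Complex.I * (t:ℂ) / 2)
    = (Real.cos (t/2) : ℂ) + (Real.sin (t/2) : ℂ) * Complex.I := by
  rw [show Complex.I * (t:ℂ) / 2 = ((t/2 : ℝ) : ℂ) * Complex.I by push_cast; ring,
    Complex.exp_mul_I, ← Complex.ofReal_cos, ← Complex.ofReal_sin]

private lemma exp_half_aux' (t : ℝ) : Complex.exp (-(Complex.I * (t:ℂ)) / 2)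
    = (Real.cos (t/2) : ℂ) - (Real.sin (t/2) : ℂ) * Complex.I := by
  rw [show -(Complex.I * (t:ℂ)) / 2 = ((-(t/2) : ℝ) : ℂ) * Complex.I by push_cast; ring,
    Complex.exp_mul_I, ← Complex.ofReal_cos, ← Complex.ofReal_sin]
  push_cast [Real.cos_neg, Real.sin_neg]
  ring

private lemma sqrt2c_sq : ((Real.sqrt 2 : ℝ) : ℂ) * ((Real.sqrt 2 : ℝ) : ℂ) = 2 := by
  rw [← Complex.ofReal_mul, Real.mul_self_sqrt (by norm_num : (0:ℝ) ≤ 2)]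
  norm_num

private lemma bilin_aux (M : Matrix (Fin 2) (Fin 2) ℝ) (v : Fin 2 → ℂ) :
    dotProduct ((M.map Complex.ofReal).mulVec v) ((M.map Complex.ofReal).mulVec v)
    = dotProduct v (((Mᵀ*M).map Complex.ofReal).mulVec v) := by
  simp [dotProduct, Matrix.mulVec, Matrix.mul_apply, Matrix.transpose_apply,
    Fin.sum_univ_two, Matrix.map_apply]
  ring

private lemma sesq_aux (M : Matrix (Fin 2) (Fin 2) ℝ) (v : Fin 2 → ℂ) :
    dotProduct (star ((M.map Complex.ofReal).mulVec v)) ((M.map Complex.ofReal).mulVec v)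
    = dotProduct (star v) (((Mᵀ*M).map Complex.ofReal).mulVec v) := by
  simp [dotProduct, Matrix.mulVec, Matrix.mul_apply, Matrix.transpose_apply,
    Fin.sum_univ_two, Matrix.map_apply, map_add, _root_.map_mul, Complex.conj_ofReal]
  ring

private lemma std_dot_aux (t : ℝ) :
    dotProduct (stdState t) (stdState t) = (Real.cos t : ℂ) := by
  have he : ∀ z : ℂ, Complex.exp z * Complex.exp z = Complex.exp (2*z) := by
    intro z; rw [← Complex.exp_add]; ring_nf
  simp only [dotProduct, Fin.sum_univ_two, stdState]
  norm_num
  rw [div_mul_div_comm, div_mul_div_comm, he, he, sqrt2c_sq]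
  rw [show (2:ℂ) * (Complex.I * t / 2) = t * Complex.I by ring,
      show (2:ℂ) * (-(Complex.I * t) / 2) = -((t:ℂ) * Complex.I) by ring]
  rw [show -((t:ℂ) * Complex.I) = (-(t:ℂ)) * Complex.I by ring, Complex.exp_mul_I,
    Complex.exp_mul_I, Complex.cos_neg, Complex.sin_neg, ← Complex.ofReal_cos]
  ring

private lemma std_norm_aux (t : ℝ) :
    dotProduct (star (stdState t)) (stdState t) = 1 := by
  simp only [dotProduct, Fin.sum_univ_two, stdState, Pi.star_apply]
  norm_num [map_div₀, ← Complex.exp_conj, Complex.conj_ofReal]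
  rw [div_mul_div_comm, div_mul_div_comm, ← Complex.exp_add, ← Complex.exp_add, sqrt2c_sq]
  simp only [map_ofNat]
  rw [show -(Complex.I * (t:ℂ)) / 2 + Complex.I * (t:ℂ) / 2 = 0 by ring,
      show Complex.I * (t:ℂ) / 2 + -(Complex.I * (t:ℂ)) / 2 = 0 by ring, Complex.exp_zero]
  norm_num

private lemma sqeq_aux {p q : ℝ} (hp : 0 ≤ p) (hq : 0 ≤ q) (h : p^2 = q^2) : p = q := by
  rcases mul_eq_zero.mp (show (p-q)*(p+q) = 0 by linear_combination h) with h' | h'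
  · linarith
  · linarith

private lemma prop0_aux (θ γ x y a b a' b' : ℝ)
    (he1 : Complex.exp (Complex.I*(θ:ℂ)/2) = (a:ℝ) + (b:ℝ)*Complex.I)
    (he2 : Complex.exp (-(Complex.I*(θ:ℂ))/2) = (a:ℝ) - (b:ℝ)*Complex.I)
    (hf1 : Complex.exp (Complex.I*(γ:ℂ)/2) = (a':ℝ) + (b':ℝ)*Complex.I)
    (hf2 : Complex.exp (-(Complex.I*(γ:ℂ))/2) = (a':ℝ) - (b':ℝ)*Complex.I)
    (ha' : a' ≠ 0) (hkey : y*b*a' = x*a*b') :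
    ((Matrix.of ![![(x+y)/2,(x-y)/2],![(x-y)/2,(x+y)/2]] : Matrix (Fin 2) (Fin 2) ℝ).map
        Complex.ofReal).mulVec (stdState θ)
      = ((x*a/a' : ℝ):ℂ) • stdState γ := by
  have hs2 : ((Real.sqrt 2 : ℝ) : ℂ) ≠ 0 := by
    simp [Real.sqrt_eq_zero']
  have ha'c : ((a' : ℝ) : ℂ) ≠ 0 := by exact_mod_cast ha'
  have hkeyc : (y:ℂ)*b*a' = (x:ℂ)*a*b' := by exact_mod_cast hkey
  funext i
  fin_cases i
  · simp only [stdState, Matrix.mulVec, dotProduct, Fin.sum_univ_two, Matrix.map_apply,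
      Pi.smul_apply, smul_eq_mul]
    norm_num [he1, he2, hf1, hf2]
    field_simp
    linear_combination (2*Complex.I) * hkeyc
  · simp only [stdState, Matrix.mulVec, dotProduct, Fin.sum_univ_two, Matrix.map_apply,
      Pi.smul_apply, smul_eq_mul]
    norm_num [he1, he2, hf1, hf2]
    field_simp
    linear_combination (-(2*Complex.I)) * hkeyc

private lemma prop1_aux (θ γ u w a b a' b' : ℝ)
    (he1 : Complex.exp (Complex.I*(θ:ℂ)/2) = (a:ℝ) + (b:ℝ)*Complex.I)
    (he2 : Complex.exp (-(Complex.I*(θ:ℂ))/2) = (a:ℝ) - (b:ℝ)*Complex.I)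
    (hf1 : Complex.exp (Complex.I*(γ:ℂ)/2) = (a':ℝ) + (b':ℝ)*Complex.I)
    (hf2 : Complex.exp (-(Complex.I*(γ:ℂ))/2) = (a':ℝ) - (b':ℝ)*Complex.I)
    (ha' : a' ≠ 0) (hkey : u*a*a' = w*b*b') :
    ((Matrix.of ![![(u-w)/2,(u+w)/2],![(u+w)/2,(u-w)/2]] : Matrix (Fin 2) (Fin 2) ℝ).map
        Complex.ofReal).mulVec (stdState θ)
      = (Complex.I * ((-(w*b)/a' : ℝ):ℂ)) •
        ((Matrix.of ![![1,0],![0,-1]] : Matrix (Fin 2) (Fin 2) ℝ).map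
          Complex.ofReal).mulVec (stdState γ) := by
  have hs2 : ((Real.sqrt 2 : ℝ) : ℂ) ≠ 0 := by
    simp [Real.sqrt_eq_zero']
  have ha'c : ((a' : ℝ) : ℂ) ≠ 0 := by exact_mod_cast ha'
  have hkeyc : (u:ℂ)*a*a' = (w:ℂ)*b*b' := by exact_mod_cast hkey
  funext i
  fin_cases i <;>
    · simp only [stdState, Matrix.mulVec, dotProduct, Fin.sum_univ_two, Matrix.map_apply,
        Pi.smul_apply, smul_eq_mul]
      norm_num [he1, he2, hf1, hf2]
      field_simp
      linear_combination (2:ℂ) * hkeyc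
        + (2*w*b*b') * Complex.I_sq

private lemma complete_aux (x y u w : ℝ) (hxu : x^2+u^2 = 1) (hyw : y^2+w^2 = 1) :
    (∑ k, ((![Matrix.of ![![(x+y)/2,(x-y)/2],![(x-y)/2,(x+y)/2]],
             Matrix.of ![![(u-w)/2,(u+w)/2],![(u+w)/2,(u-w)/2]]] :
        Fin 2 → Matrix (Fin 2) (Fin 2) ℝ) k)ᵀ
      * (![Matrix.of ![![(x+y)/2,(x-y)/2],![(x-y)/2,(x+y)/2]],
           Matrix.of ![![(u-w)/2,(u+w)/2],![(u+w)/2,(u-w)/2]]] :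
        Fin 2 → Matrix (Fin 2) (Fin 2) ℝ) k) = 1 := by
  rw [Fin.sum_univ_two]
  ext i j
  fin_cases i <;> fin_cases j <;>
    simp [Matrix.mul_apply, Fin.sum_univ_two, Matrix.one_apply, Matrix.transpose_apply, Matrix.vecHead, Matrix.vecTail] <;>
    nlinarith [hxu, hyw]

private lemma orthO_aux (k : Fin 2) :
    ((![1, Matrix.of ![![1,0],![0,-1]]] : Fin 2 → Matrix (Fin 2) (Fin 2) ℝ) k)ᵀ
      * (![1, Matrix.of ![![1,0],![0,-1]]] : Fin 2 → Matrix (Fin 2) (Fin 2) ℝ) k = 1 := by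
  fin_cases k
  · simp
  · ext i j
    fin_cases i <;> fin_cases j <;>
      simp [Matrix.mul_apply, Fin.sum_univ_two, Matrix.one_apply, Matrix.transpose_apply, Matrix.vecHead, Matrix.vecTail]

private lemma dot_mulVec_sum_aux {N : ℕ} (v : Fin 2 → ℂ)
    (M : Fin N → Matrix (Fin 2) (Fin 2) ℂ) :
    dotProduct v ((∑ k, M k).mulVec v) = ∑ k, dotProduct v ((M k).mulVec v) := by
  induction (Finset.univ : Finset (Fin N)) using Finset.induction with
  | empty => simp
  | insert _ _ h ih => simp only [Finset.sum_insert h, Matrix.add_mulVec, dotProduct_add, ih]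

private lemma star_dot_mulVec_sum_aux {N : ℕ} (v : Fin 2 → ℂ)
    (M : Fin N → Matrix (Fin 2) (Fin 2) ℂ) :
    dotProduct (star v) ((∑ k, M k).mulVec v)
      = ∑ k, dotProduct (star v) ((M k).mulVec v) := by
  induction (Finset.univ : Finset (Fin N)) using Finset.induction with
  | empty => simp
  | insert _ _ h ih => simp only [Finset.sum_insert h, Matrix.add_mulVec, dotProduct_add, ih]

private lemma map_sum_one_aux {N : ℕ} (K : Fin N → Matrix (Fin 2) (Fin 2) ℝ)
    (h : ∑ k, (K k)ᵀ * K k = 1) :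
    ∑ k, ((K k)ᵀ * K k).map Complex.ofReal = 1 := by
  have h2 := congrArg (fun M => Matrix.map M Complex.ofReal) h
  rw [Matrix.map_one _ Complex.ofReal_zero Complex.ofReal_one] at h2
  rw [← h2]
  exact (map_sum (Complex.ofRealHom.mapMatrix (m := Fin 2)) _ Finset.univ).symm

private lemma dot_smul_smul_aux (c : ℂ) (v w : Fin 2 → ℂ) :
    dotProduct (c • v) (c • w) = c^2 * dotProduct v w := by
  simp [dotProduct, Fin.sum_univ_two]
  ring

/-- Forward direction. -/
private lemma forward_aux (θ γ : ℝ)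
    (hθ : θ ∈ Set.Icc 0 (Real.pi / 2)) (hγ : γ ∈ Set.Icc 0 (Real.pi / 2))
    (h : ∃ (N : ℕ) (K : Fin N → Matrix (Fin 2) (Fin 2) ℝ)
          (O : Fin N → Matrix (Fin 2) (Fin 2) ℝ),
        (∑ k, (K k)ᵀ * K k = 1) ∧ (∀ k, (O k)ᵀ * O k = 1) ∧
        (∀ k, ∃ c : ℂ, ((K k).map Complex.ofReal).mulVec (stdState θ)
            = c • ((O k).map Complex.ofReal).mulVec (stdState γ))) :
    γ ≤ θ := by
  obtain ⟨N, K, O, hK, hO, hprop⟩ := h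
  choose c hc using hprop
  have hOdot : ∀ k, dotProduct (((O k).map Complex.ofReal).mulVec (stdState γ))
      (((O k).map Complex.ofReal).mulVec (stdState γ)) = (Real.cos γ : ℂ) := by
    intro k
    rw [bilin_aux, hO k, Matrix.map_one _ Complex.ofReal_zero Complex.ofReal_one,
      Matrix.one_mulVec, std_dot_aux]
  have hOnorm : ∀ k, dotProduct (star (((O k).map Complex.ofReal).mulVec (stdState γ)))
      (((O k).map Complex.ofReal).mulVec (stdState γ)) = 1 := by
    intro k
    rw [sesq_aux, hO k, Matrix.map_one _ Complex.ofReal_zero Complex.ofReal_one,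
      Matrix.one_mulVec, std_norm_aux]
  -- sum of bilinear forms equals cos θ
  have hsum1 : ∑ k, dotProduct ((( K k).map Complex.ofReal).mulVec (stdState θ))
      (((K k).map Complex.ofReal).mulVec (stdState θ)) = (Real.cos θ : ℂ) := by
    calc ∑ k, dotProduct (((K k).map Complex.ofReal).mulVec (stdState θ))
          (((K k).map Complex.ofReal).mulVec (stdState θ))
        = ∑ k, dotProduct (stdState θ)
            ((((K k)ᵀ * K k).map Complex.ofReal).mulVec (stdState θ)) := by
          exact Finset.sum_congr rfl fun k _ => bilin_aux (K k) (stdState θ)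
      _ = dotProduct (stdState θ)
            ((∑ k, ((K k)ᵀ * K k).map Complex.ofReal).mulVec (stdState θ)) := by
          rw [dot_mulVec_sum_aux]
      _ = (Real.cos θ : ℂ) := by
          rw [map_sum_one_aux K hK, Matrix.one_mulVec, std_dot_aux]
  have hsum2 : ∑ k, dotProduct (star (((K k).map Complex.ofReal).mulVec (stdState θ)))
      (((K k).map Complex.ofReal).mulVec (stdState θ)) = 1 := by
    calc ∑ k, dotProduct (star (((K k).map Complex.ofReal).mulVec (stdState θ)))
          (((K k).map Complex.ofReal).mulVec (stdState θ))
        = ∑ k, dotProduct (star (stdState θ))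
            ((((K k)ᵀ * K k).map Complex.ofReal).mulVec (stdState θ)) := by
          exact Finset.sum_congr rfl fun k _ => sesq_aux (K k) (stdState θ)
      _ = dotProduct (star (stdState θ))
            ((∑ k, ((K k)ᵀ * K k).map Complex.ofReal).mulVec (stdState θ)) := by
          rw [star_dot_mulVec_sum_aux]
      _ = 1 := by
          rw [map_sum_one_aux K hK, Matrix.one_mulVec, std_norm_aux]
  -- rewrite using hc
  have hterm1 : ∀ k, dotProduct (((K k).map Complex.ofReal).mulVec (stdState θ))
      (((K k).map Complex.ofReal).mulVec (stdState θ))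
      = (c k)^2 * (Real.cos γ : ℂ) := by
    intro k
    rw [hc k, dot_smul_smul_aux, hOdot k]
  have hterm2 : ∀ k, dotProduct (star (((K k).map Complex.ofReal).mulVec (stdState θ)))
      (((K k).map Complex.ofReal).mulVec (stdState θ))
      = (Complex.normSq (c k) : ℂ) := by
    intro k
    rw [hc k, star_smul]
    have : dotProduct (star (c k) • star (((O k).map Complex.ofReal).mulVec (stdState γ)))
        (c k • ((O k).map Complex.ofReal).mulVec (stdState γ))
        = star (c k) * (c k) *
          dotProduct (star (((O k).map Complex.ofReal).mulVec (stdState γ)))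
            (((O k).map Complex.ofReal).mulVec (stdState γ)) := by
      simp [dotProduct, Fin.sum_univ_two]
      ring
    rw [this, hOnorm k, mul_one, Complex.star_def,
      ← Complex.normSq_eq_conj_mul_self]
  have hS : (∑ k, (c k)^2) * (Real.cos γ : ℂ) = (Real.cos θ : ℂ) := by
    rw [Finset.sum_mul, ← hsum1]
    exact Finset.sum_congr rfl fun k _ => (hterm1 k).symm
  have hn : ∑ k, Complex.normSq (c k) = 1 := by
    have : (↑(∑ k, Complex.normSq (c k)) : ℂ) = 1 := by
      push_cast
      rw [← hsum2]
      exact Finset.sum_congr rfl fun k _ => (hterm2 k).symm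
    exact_mod_cast this
  -- real inequality
  have hre : Real.cos θ = (∑ k, (c k)^2).re * Real.cos γ := by
    have := congrArg Complex.re hS
    simpa [Complex.mul_re, Complex.ofReal_re, Complex.ofReal_im, Complex.cos_ofReal_re] using this.symm
  have hrebound : (∑ k, (c k)^2).re ≤ 1 := by
    rw [Complex.re_sum, ← hn]
    refine Finset.sum_le_sum fun k _ => ?_
    have h1 := Complex.re_le_norm ((c k)^2)
    have h2 : ‖(c k)^2‖ = Complex.normSq (c k) := by
      rw [norm_pow, Complex.sq_norm]
    linarith
  have hcγ0 : 0 ≤ Real.cos γ :=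
    Real.cos_nonneg_of_mem_Icc ⟨by linarith [hγ.1, Real.pi_pos], hγ.2⟩
  have hfinal : Real.cos θ ≤ Real.cos γ := by
    rw [hre]
    nlinarith
  by_contra hcon
  push_neg at hcon
  have := Real.cos_lt_cos_of_nonneg_of_le_pi hθ.1
    (by linarith [hγ.2, Real.pi_pos] : γ ≤ Real.pi) hcon
  linarith

set_option maxHeartbeats 1000000 in
/-- analogue of Nielsen's theorem: for `θ, γ ∈ [0, π/2]` there exists a
TRIO measurement (real Kraus operators `K_k` with `Σ_k K_k†K_k = 1`) together with
real orthogonal corrections `O_k` such that each branch `K_k|ψ_θ⟩` is proportional to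
`O_k|ψ_γ⟩`, if and only if `γ ≤ θ`. -/
theorem nielsen_analogue
    (θ γ : ℝ) (hθ : θ ∈ Set.Icc 0 (Real.pi / 2)) (hγ : γ ∈ Set.Icc 0 (Real.pi / 2)) :
    (∃ (N : ℕ) (K : Fin N → Matrix (Fin 2) (Fin 2) ℝ) (O : Fin N → Matrix (Fin 2) (Fin 2) ℝ),
        (∑ k, (K k)ᵀ * K k = 1) ∧ (∀ k, (O k)ᵀ * O k = 1) ∧
        (∀ k, ∃ c : ℂ, ((K k).map Complex.ofReal).mulVec (stdState θ)
            = c • ((O k).map Complex.ofReal).mulVec (stdState γ)))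
      ↔ γ ≤ θ := by
  constructor
  · exact forward_aux θ γ hθ hγ
  · intro hle
    rcases eq_or_lt_of_le hle with heq | hlt
    · -- γ = θ : identity
      refine ⟨1, fun _ => 1, fun _ => 1, ?_, fun k => by simp, fun k => ⟨1, ?_⟩⟩
      · simp
      · rw [Matrix.map_one _ Complex.ofReal_zero Complex.ofReal_one, Matrix.one_mulVec,
          Matrix.one_mulVec, heq, one_smul]
    · -- strict case
      obtain ⟨hθ0, hθ1⟩ := hθ
      obtain ⟨hγ0, hγ1⟩ := hγ
      have hpi := Real.pi_pos
      have hcθ0 : 0 ≤ Real.cos θ := Real.cos_nonneg_of_mem_Icc ⟨by linarith, hθ1⟩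
      have hcc : Real.cos θ < Real.cos γ :=
        Real.cos_lt_cos_of_nonneg_of_le_pi hγ0 (by linarith) hlt
      have hcγ1 : Real.cos γ ≤ 1 := Real.cos_le_one γ
      obtain ⟨a, b, ha0, hb0, ha2, hb2, he1, he2⟩ :
          ∃ a b : ℝ, 0 ≤ a ∧ 0 ≤ b ∧ a^2 = (1 + Real.cos θ)/2 ∧ b^2 = (1 - Real.cos θ)/2 ∧
            Complex.exp (Complex.I*(θ:ℂ)/2) = (a:ℝ) + (b:ℝ)*Complex.I ∧
            Complex.exp (-(Complex.I*(θ:ℂ))/2) = (a:ℝ) - (b:ℝ)*Complex.I := by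
        refine ⟨Real.cos (θ/2), Real.sin (θ/2),
          Real.cos_nonneg_of_mem_Icc ⟨by linarith, by linarith⟩,
          Real.sin_nonneg_of_nonneg_of_le_pi (by linarith) (by linarith), ?_, ?_,
          exp_half_aux θ, exp_half_aux' θ⟩
        · have h := Real.cos_sq (θ/2); rw [show 2*(θ/2) = θ by ring] at h; linarith
        · have h := Real.sin_sq (θ/2)
          have h2 := Real.cos_sq (θ/2); rw [show 2*(θ/2) = θ by ring] at h2; linarith
      obtain ⟨a', b', ha'pos, hb'0, ha'2, hb'2, hf1, hf2⟩ :
          ∃ a' b' : ℝ, 0 < a' ∧ 0 ≤ b' ∧ a'^2 = (1 + Real.cos γ)/2 ∧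
            b'^2 = (1 - Real.cos γ)/2 ∧
            Complex.exp (Complex.I*(γ:ℂ)/2) = (a':ℝ) + (b':ℝ)*Complex.I ∧
            Complex.exp (-(Complex.I*(γ:ℂ))/2) = (a':ℝ) - (b':ℝ)*Complex.I := by
        refine ⟨Real.cos (γ/2), Real.sin (γ/2),
          Real.cos_pos_of_mem_Ioo ⟨by linarith, by linarith⟩,
          Real.sin_nonneg_of_nonneg_of_le_pi (by linarith) (by linarith), ?_, ?_,
          exp_half_aux γ, exp_half_aux' γ⟩
        · have h := Real.cos_sq (γ/2); rw [show 2*(γ/2) = γ by ring] at h; linarith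
        · have h := Real.sin_sq (γ/2)
          have h2 := Real.cos_sq (γ/2); rw [show 2*(γ/2) = γ by ring] at h2; linarith
      clear hθ0 hθ1 hγ0 hγ1 hlt hle hpi
      obtain ⟨cθ, cγ, hc0, hccc, hc1, ha2, hb2, ha'2, hb'2⟩ :
          ∃ cθ cγ : ℝ, 0 ≤ cθ ∧ cθ < cγ ∧ cγ ≤ 1 ∧ a^2 = (1+cθ)/2 ∧ b^2 = (1-cθ)/2 ∧
            a'^2 = (1+cγ)/2 ∧ b'^2 = (1-cγ)/2 :=
        ⟨Real.cos θ, Real.cos γ, hcθ0, hcc, hcγ1, ha2, hb2, ha'2, hb'2⟩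
      clear hcθ0 hcc hcγ1
      have hcγ0 : 0 < cγ := lt_of_le_of_lt hc0 hccc
      have h1m : 0 < 1 - cθ := by nlinarith
      have h1p : 0 < 1 + cθ := by linarith
      have h1pγ : 0 < 1 + cγ := by linarith
      have h1mγ : 0 ≤ 1 - cγ := by linarith
      obtain ⟨x, hx0, hx2⟩ : ∃ x : ℝ, 0 ≤ x ∧ x^2 = (cθ+cγ)*(1+cγ)/(2*cγ*(1+cθ)) :=
        ⟨Real.sqrt _, Real.sqrt_nonneg _,
          Real.sq_sqrt (div_nonneg (by nlinarith) (by nlinarith))⟩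
      obtain ⟨y, hy0, hy2⟩ : ∃ y : ℝ, 0 ≤ y ∧ y^2 = (cθ+cγ)*(1-cγ)/(2*cγ*(1-cθ)) :=
        ⟨Real.sqrt _, Real.sqrt_nonneg _,
          Real.sq_sqrt (div_nonneg (by nlinarith) (by nlinarith))⟩
      obtain ⟨u, hu0, hu2⟩ : ∃ u : ℝ, 0 ≤ u ∧ u^2 = (cγ-cθ)*(1-cγ)/(2*cγ*(1+cθ)) :=
        ⟨Real.sqrt _, Real.sqrt_nonneg _,
          Real.sq_sqrt (div_nonneg (by nlinarith) (by nlinarith))⟩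
      obtain ⟨w, hw0, hw2⟩ : ∃ w : ℝ, 0 ≤ w ∧ w^2 = (cγ-cθ)*(1+cγ)/(2*cγ*(1-cθ)) :=
        ⟨Real.sqrt _, Real.sqrt_nonneg _,
          Real.sq_sqrt (div_nonneg (by nlinarith) (by nlinarith))⟩
      have hxu : x^2 + u^2 = 1 := by rw [hx2, hu2]; field_simp; ring
      have hyw : y^2 + w^2 = 1 := by rw [hy2, hw2]; field_simp; ring
      have hI2 : y*b*a' = x*a*b' := by
        refine sqeq_aux (by positivity) (by positivity) ?_
        rw [mul_pow, mul_pow, mul_pow, mul_pow, hx2, hy2, ha2, hb2, ha'2, hb'2]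
        field_simp
      have hI4 : u*a*a' = w*b*b' := by
        refine sqeq_aux (by positivity) (by positivity) ?_
        rw [mul_pow, mul_pow, mul_pow, mul_pow, hu2, hw2, ha2, hb2, ha'2, hb'2]
        field_simp
      clear hx2 hy2 hu2 hw2 ha2 hb2 ha'2 hb'2 hc0 hccc hc1 hcγ0 h1m h1p h1pγ h1mγ
      refine ⟨2, ![Matrix.of ![![(x+y)/2,(x-y)/2],![(x-y)/2,(x+y)/2]],
                   Matrix.of ![![(u-w)/2,(u+w)/2],![(u+w)/2,(u-w)/2]]],
                ![1, Matrix.of ![![1,0],![0,-1]]],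
                complete_aux x y u w hxu hyw, orthO_aux, ?_⟩
      intro k
      fin_cases k
      · refine ⟨((x*a/a' : ℝ) : ℂ), ?_⟩
        have := prop0_aux θ γ x y a b a' b' he1 he2 hf1 hf2 ha'pos.ne' hI2
        simpa [Matrix.map_one _ Complex.ofReal_zero Complex.ofReal_one,
          Matrix.one_mulVec] using this
      · exact ⟨Complex.I * ((-(w*b)/a' : ℝ):ℂ),
          prop1_aux θ γ u w a b a' b' he1 he2 hf1 hf2 ha'pos.ne' hI4⟩
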